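/- For a nonempty set 𝔓 of probability measures on (Ω,𝓕), the following are equivalent: (1) L^∞_𝐜 is super Dedekind complete; (2) 𝔓 is dominated, i.e. there is a probability measure P on (Ω,𝓕) such that every P-null event is 𝔓-polar; (3) every μ ∈ ca_𝐜 is supported (sca_𝐜 = ca_𝐜) and L^∞_𝐜 has the countable sup property; (4) there is a strictly positive linear functional ξ: L^∞_𝐜 → ℝ (ξ(X) > 0 whenever 0 ≺ X). -/

import Mathlib

open MeasureTheory Set Filter

namespace Robust

universe u

variable {Ω : Type*} [MeasurableSpace Ω]

/-- `N` is a `𝔓`-polar event: every measure in `𝔓` assigns it measure zero. -/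
def Polar (𝔓 : Set (Measure Ω)) (N : Set Ω) : Prop := ∀ P ∈ 𝔓, P N = 0

/-- `f ≤ g` holds `𝔓`-quasi surely. -/
def QSLe (𝔓 : Set (Measure Ω)) (f g : Ω → ℝ) : Prop := Polar 𝔓 {ω | ¬ f ω ≤ g ω}

/-- `f = g` holds `𝔓`-quasi surely; this is the equivalence relation defining `L⁰_𝐜`. -/
def QSEq (𝔓 : Set (Measure Ω)) (f g : Ω → ℝ) : Prop := QSLe 𝔓 f g ∧ QSLe 𝔓 g f

/-- A representative of an element of `L^∞_𝐜`: a measurable, `𝔓`-q.s. bounded function. -/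
def MemLinf (𝔓 : Set (Measure Ω)) (f : Ω → ℝ) : Prop :=
  Measurable f ∧ ∃ m : ℝ, QSLe 𝔓 (fun ω => |f ω|) fun _ => m

/-- The `L^∞_𝐜` norm of (the class of) `f`. -/
noncomputable def linfNorm (𝔓 : Set (Measure Ω)) (f : Ω → ℝ) : ℝ :=
  sInf {m : ℝ | 0 ≤ m ∧ QSLe 𝔓 (fun ω => |f ω|) fun _ => m}

/-- `g` is a `𝔓`-q.s. upper bound of the set of functions `S`. -/
def IsQSUB (𝔓 : Set (Measure Ω)) (S : Set (Ω → ℝ)) (g : Ω → ℝ) : Prop := ∀ f ∈ S, QSLe 𝔓 f g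

/-- `g` is a `𝔓`-q.s. lower bound of the set of functions `S`. -/
def IsQSLB (𝔓 : Set (Measure Ω)) (S : Set (Ω → ℝ)) (g : Ω → ℝ) : Prop := ∀ f ∈ S, QSLe 𝔓 g f

/-- `g` is a supremum of `S` in `L⁰_𝐜` (least upper bound for the q.s. order). -/
def IsQSSup (𝔓 : Set (Measure Ω)) (S : Set (Ω → ℝ)) (g : Ω → ℝ) : Prop :=
  IsQSUB 𝔓 S g ∧ ∀ h : Ω → ℝ, Measurable h → IsQSUB 𝔓 S h → QSLe 𝔓 g h

/-- `g` is an infimum of `S` in `L⁰_𝐜` (greatest lower bound for the q.s. order). -/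
def IsQSInf (𝔓 : Set (Measure Ω)) (S : Set (Ω → ℝ)) (g : Ω → ℝ) : Prop :=
  IsQSLB 𝔓 S g ∧ ∀ h : Ω → ℝ, Measurable h → IsQSLB 𝔓 S h → QSLe 𝔓 h g

/-- `S` is an order support of the measure `μ` relative to `𝔓`. -/
def IsOrderSupport (𝔓 : Set (Measure Ω)) (μ : Measure Ω) (S : Set Ω) : Prop :=
  MeasurableSet S ∧ μ Sᶜ = 0 ∧
    ∀ N : Set Ω, MeasurableSet N → μ (N ∩ S) = 0 → Polar 𝔓 (N ∩ S)

/-- The measure `μ` is supported (relative to the polar events of `𝔓`). -/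
def Supported (𝔓 : Set (Measure Ω)) (μ : Measure Ω) : Prop := ∃ S, IsOrderSupport 𝔓 μ S

/-- Two sets of measures are equivalent: they have the same polar events. -/
def PolarEquiv (𝔓 𝔔 : Set (Measure Ω)) : Prop :=
  ∀ N : Set Ω, MeasurableSet N → (Polar 𝔓 N ↔ Polar 𝔔 N)

/-- `𝔔` is a supported alternative to `𝔓`. -/
def IsSuppAlt (𝔓 𝔔 : Set (Measure Ω)) : Prop :=
  𝔔.Nonempty ∧ (∀ Q ∈ 𝔔, IsProbabilityMeasure Q) ∧ PolarEquiv 𝔓 𝔔 ∧ ∀ Q ∈ 𝔔, Supported 𝔓 Q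

/-- `𝔓` is of class (S). -/
def ClassS (𝔓 : Set (Measure Ω)) : Prop := ∃ 𝔔 : Set (Measure Ω), IsSuppAlt 𝔓 𝔔

/-- The total variation norm of a signed measure. -/
noncomputable def tv (μ : SignedMeasure Ω) : ℝ := (μ.totalVariation Set.univ).toReal

/-- `ca_𝐜`: signed measures whose total variation vanishes on `𝔓`-polar events. -/
def caC (𝔓 : Set (Measure Ω)) : Set (SignedMeasure Ω) :=
  {μ | ∀ N : Set Ω, MeasurableSet N → Polar 𝔓 N → μ.totalVariation N = 0}

/-- `sca_𝐜`: members of `ca_𝐜` whose total variation is supported. -/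
def scaC (𝔓 : Set (Measure Ω)) : Set (SignedMeasure Ω) :=
  {μ | μ ∈ caC 𝔓 ∧ Supported 𝔓 μ.totalVariation}

/-- Integral of `f` against a signed measure, via the Jordan decomposition. -/
noncomputable def integSM (f : Ω → ℝ) (μ : SignedMeasure Ω) : ℝ :=
  ∫ ω, f ω ∂μ.toJordanDecomposition.posPart - ∫ ω, f ω ∂μ.toJordanDecomposition.negPart

/-- `ca_{𝐜,+}`: finite (nonnegative) measures vanishing on `𝔓`-polar events. -/
def caCpos (𝔓 : Set (Measure Ω)) : Set (Measure Ω) :=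
  {μ | IsFiniteMeasure μ ∧ ∀ N : Set Ω, MeasurableSet N → Polar 𝔓 N → μ N = 0}

/-- Order convergence in `L⁰_𝐜` of a net `X` to `x`: there is an antitone net of measurable
functions with q.s. infimum `0` dominating `|X α - x|`. -/
def OrderConvTo (𝔓 : Set (Measure Ω)) {ι : Type u} [Preorder ι]
    (X : ι → Ω → ℝ) (x : Ω → ℝ) : Prop :=
  ∃ Y : ι → Ω → ℝ, (∀ α, Measurable (Y α)) ∧
    (∀ α β, α ≤ β → QSLe 𝔓 (Y β) (Y α)) ∧
    IsQSInf 𝔓 (Set.range Y) (fun _ => 0) ∧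
    ∀ α, QSLe 𝔓 (fun ω => |X α ω - x ω|) (Y α)

/-- Order convergence in `L^∞_𝐜` of a net `X` to `x`: the dominating net lies in `L^∞_𝐜`. -/
def OrderConvToLinf (𝔓 : Set (Measure Ω)) {ι : Type u} [Preorder ι]
    (X : ι → Ω → ℝ) (x : Ω → ℝ) : Prop :=
  ∃ Y : ι → Ω → ℝ, (∀ α, MemLinf 𝔓 (Y α)) ∧
    (∀ α β, α ≤ β → QSLe 𝔓 (Y β) (Y α)) ∧
    IsQSInf 𝔓 (Set.range Y) (fun _ => 0) ∧
    ∀ α, QSLe 𝔓 (fun ω => |X α ω - x ω|) (Y α)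

/-- A set of (classes of) functions in `L⁰_𝐜` is order closed: it contains (a representative of)
the order limit of every order convergent net of its elements. -/
def OrderClosedL0 (𝔓 : Set (Measure Ω)) (𝒞 : Set (Ω → ℝ)) : Prop :=
  ∀ (ι : Type u) [Preorder ι] [IsDirected ι (· ≤ ·)] [Nonempty ι],
    ∀ (X : ι → Ω → ℝ) (x : Ω → ℝ), (∀ α, X α ∈ 𝒞) → Measurable x →
      OrderConvTo 𝔓 X x → ∃ x' ∈ 𝒞, QSEq 𝔓 x x'

/-- A subset of `L^∞_𝐜` is order closed. -/
def OrderClosedLinf (𝔓 : Set (Measure Ω)) (𝒞 : Set (Ω → ℝ)) : Prop :=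
  ∀ (ι : Type u) [Preorder ι] [IsDirected ι (· ≤ ·)] [Nonempty ι],
    ∀ (X : ι → Ω → ℝ) (x : Ω → ℝ), (∀ α, X α ∈ 𝒞) → MemLinf 𝔓 x →
      OrderConvToLinf 𝔓 X x → ∃ x' ∈ 𝒞, QSEq 𝔓 x x'

/-- `L^∞_𝐜` is Dedekind complete: every nonempty subset bounded above has a supremum. -/
def LinfDedekind (𝔓 : Set (Measure Ω)) : Prop :=
  ∀ S : Set (Ω → ℝ), S.Nonempty → (∀ f ∈ S, MemLinf 𝔓 f) →
    (∃ h, MemLinf 𝔓 h ∧ IsQSUB 𝔓 S h) →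
    ∃ g, MemLinf 𝔓 g ∧ IsQSSup 𝔓 S g

/-- `L^∞_𝐜` has the countable sup property. -/
def LinfCountableSup (𝔓 : Set (Measure Ω)) : Prop :=
  ∀ S : Set (Ω → ℝ), (∀ f ∈ S, MemLinf 𝔓 f) →
    ∀ g, MemLinf 𝔓 g → IsQSSup 𝔓 S g →
      ∃ D ⊆ S, D.Countable ∧ IsQSSup 𝔓 D g

/-- indicator function of a set, real valued. -/
noncomputable def indC (A : Set Ω) : Ω → ℝ := A.indicator 1

/-- `𝔓` is dominated by a single probability measure. -/
def Dominated (𝔓 : Set (Measure Ω)) : Prop :=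
  ∃ P : Measure Ω, IsProbabilityMeasure P ∧
    ∀ N : Set Ω, MeasurableSet N → P N = 0 → Polar 𝔓 N

/-- `ξ` is a strictly positive linear functional on `L^∞_𝐜`. -/
def StrictlyPositiveFunctional (𝔓 : Set (Measure Ω)) (ξ : (Ω → ℝ) → ℝ) : Prop :=
  (∀ f g : Ω → ℝ, MemLinf 𝔓 f → MemLinf 𝔓 g → QSEq 𝔓 f g → ξ f = ξ g) ∧
  (∀ f g : Ω → ℝ, MemLinf 𝔓 f → MemLinf 𝔓 g → ξ (f + g) = ξ f + ξ g) ∧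
  (∀ (c : ℝ) (f : Ω → ℝ), MemLinf 𝔓 f → ξ (c • f) = c * ξ f) ∧
  (∀ f : Ω → ℝ, MemLinf 𝔓 f → QSLe 𝔓 0 f → ¬ QSEq 𝔓 f 0 → 0 < ξ f)

section Basic

variable {𝔓 : Set (Measure Ω)}

lemma polar_mono {N M : Set Ω} (h : N ⊆ M) (hM : Polar 𝔓 M) : Polar 𝔓 N :=
  fun P hP => measure_mono_null h (hM P hP)

lemma polar_empty : Polar 𝔓 (∅ : Set Ω) := fun P _ => measure_empty

lemma polar_union {N M : Set Ω} (hN : Polar 𝔓 N) (hM : Polar 𝔓 M) : Polar 𝔓 (N ∪ M) :=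
  fun P hP => measure_union_null (hN P hP) (hM P hP)

lemma polar_iUnion {N : ℕ → Set Ω} (h : ∀ n, Polar 𝔓 (N n)) : Polar 𝔓 (⋃ n, N n) :=
  fun P hP => measure_iUnion_null fun n => h n P hP

lemma qsle_of_subset {f g : Ω → ℝ} {N : Set Ω} (hN : Polar 𝔓 N)
    (h : ∀ ω, ω ∉ N → f ω ≤ g ω) : QSLe 𝔓 f g := by
  refine polar_mono (fun ω hω => ?_) hN
  by_contra hc
  exact hω (h ω hc)

lemma qsle_of_le {f g : Ω → ℝ} (h : ∀ ω, f ω ≤ g ω) : QSLe 𝔓 f g :=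
  qsle_of_subset polar_empty fun ω _ => h ω

lemma qsle_refl (f : Ω → ℝ) : QSLe 𝔓 f f := qsle_of_le fun _ => le_rfl

lemma QSLe.trans {f g h : Ω → ℝ} (h1 : QSLe 𝔓 f g) (h2 : QSLe 𝔓 g h) : QSLe 𝔓 f h := by
  refine polar_mono (fun ω hω => ?_) (polar_union h1 h2)
  simp only [Set.mem_setOf_eq, Set.mem_union] at hω ⊢
  by_contra hc
  push_neg at hc
  exact hω (le_trans hc.1 hc.2)

lemma not_polar_univ (h𝔓 : 𝔓.Nonempty) (hprob : ∀ P ∈ 𝔓, IsProbabilityMeasure P) :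
    ¬ Polar 𝔓 (Set.univ : Set Ω) := by
  obtain ⟨P, hP⟩ := h𝔓
  intro h
  have := hprob P hP
  have h1 : P Set.univ = 1 := measure_univ
  rw [h P hP] at h1
  exact zero_ne_one h1

lemma memLinf_const (c : ℝ) : MemLinf 𝔓 (fun _ => c) :=
  ⟨measurable_const, |c|, qsle_of_le fun _ => le_rfl⟩

lemma memLinf_zero : MemLinf 𝔓 (0 : Ω → ℝ) := memLinf_const 0

lemma MemLinf.sub {f g : Ω → ℝ} (hf : MemLinf 𝔓 f) (hg : MemLinf 𝔓 g) :
    MemLinf 𝔓 (f - g) := by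
  obtain ⟨hfm, mf, hmf⟩ := hf
  obtain ⟨hgm, mg, hmg⟩ := hg
  refine ⟨hfm.sub hgm, mf + mg, qsle_of_subset (polar_union hmf hmg) fun ω hω => ?_⟩
  simp only [Set.mem_union, Set.mem_setOf_eq, not_or, not_not] at hω
  calc |(f - g) ω| = |f ω - g ω| := rfl
    _ ≤ |f ω| + |g ω| := abs_sub _ _
    _ ≤ mf + mg := add_le_add hω.1 hω.2

lemma not_isQSSup_empty (h𝔓 : 𝔓.Nonempty) (hprob : ∀ P ∈ 𝔓, IsProbabilityMeasure P)
    {g : Ω → ℝ} (hg : Measurable g) : ¬ IsQSSup 𝔓 (∅ : Set (Ω → ℝ)) g := by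
  rintro ⟨-, hleast⟩
  have h1 : QSLe 𝔓 g (fun ω => g ω - 1) :=
    hleast _ (hg.sub measurable_const) (fun f hf => absurd hf (Set.notMem_empty f))
  refine not_polar_univ h𝔓 hprob (polar_mono (fun ω _ => ?_) h1)
  simp only [Set.mem_setOf_eq]
  linarith

end Basic
section BSup

variable {𝔓 : Set (Measure Ω)}

/-- truncated countable supremum -/
noncomputable def bsup (u : ℕ → Ω → ℝ) (h : Ω → ℝ) : Ω → ℝ :=
  fun ω => ⨆ n, min (u n ω) (h ω)

lemma bsup_bdd (u : ℕ → Ω → ℝ) (h : Ω → ℝ) (ω : Ω) :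
    BddAbove (Set.range fun n => min (u n ω) (h ω)) :=
  ⟨h ω, by rintro r ⟨n, rfl⟩; exact min_le_right _ _⟩

lemma min_le_bsup (u : ℕ → Ω → ℝ) (h : Ω → ℝ) (n : ℕ) (ω : Ω) :
    min (u n ω) (h ω) ≤ bsup u h ω :=
  le_ciSup (bsup_bdd u h ω) n

lemma bsup_le {u : ℕ → Ω → ℝ} {h : Ω → ℝ} {ω : Ω} {c : ℝ}
    (hc : ∀ n, min (u n ω) (h ω) ≤ c) : bsup u h ω ≤ c :=
  ciSup_le hc

lemma bsup_le_h (u : ℕ → Ω → ℝ) (h : Ω → ℝ) (ω : Ω) : bsup u h ω ≤ h ω :=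
  bsup_le fun _ => min_le_right _ _

lemma measurable_bsup {u : ℕ → Ω → ℝ} {h : Ω → ℝ} (hu : ∀ n, Measurable (u n))
    (hh : Measurable h) : Measurable (bsup u h) :=
  Measurable.iSup fun n => (hu n).min hh

lemma memLinf_bsup {u : ℕ → Ω → ℝ} {h : Ω → ℝ} (hu0 : MemLinf 𝔓 (u 0))
    (hh : MemLinf 𝔓 h) (hum : ∀ n, Measurable (u n)) : MemLinf 𝔓 (bsup u h) := by
  obtain ⟨h0m, m0, hm0⟩ := hu0
  obtain ⟨hhm, mh, hmh⟩ := hh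
  refine ⟨measurable_bsup hum hhm, max m0 mh, qsle_of_subset (polar_union hm0 hmh)
    fun ω hω => ?_⟩
  simp only [Set.mem_union, Set.mem_setOf_eq, not_or, not_not] at hω
  have h1 : bsup u h ω ≤ max m0 mh :=
    le_trans (bsup_le_h u h ω) (le_trans (le_trans (le_abs_self _) hω.2) (le_max_right _ _))
  have h2 : -(max m0 mh) ≤ bsup u h ω := by
    refine le_trans ?_ (min_le_bsup u h 0 ω)
    have hu0' : -m0 ≤ u 0 ω := neg_le_of_abs_le hω.1
    have hh' : -mh ≤ h ω := neg_le_of_abs_le hω.2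
    refine le_min (le_trans ?_ hu0') (le_trans ?_ hh') <;>
      simp [neg_le_neg_iff, le_max_left, le_max_right]
  exact abs_le.2 ⟨h2, h1⟩

/-- prepend an element to a sequence -/
def conss (f : Ω → ℝ) (u : ℕ → Ω → ℝ) : ℕ → Ω → ℝ := fun n => Nat.rec f (fun m _ => u m) n

@[simp] lemma conss_zero (f : Ω → ℝ) (u : ℕ → Ω → ℝ) : conss f u 0 = f := rfl
@[simp] lemma conss_succ (f : Ω → ℝ) (u : ℕ → Ω → ℝ) (n : ℕ) : conss f u (n + 1) = u n := rfl

lemma bsup_conss (f : Ω → ℝ) (u : ℕ → Ω → ℝ) (h : Ω → ℝ) (ω : Ω) :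
    bsup (conss f u) h ω = max (min (f ω) (h ω)) (bsup u h ω) := by
  refine le_antisymm (bsup_le fun n => ?_) (max_le ?_ ?_)
  · cases n with
    | zero => exact le_max_left _ _
    | succ m => exact le_trans (min_le_bsup u h m ω) (le_max_right _ _)
  · exact min_le_bsup (conss f u) h 0 ω
  · exact bsup_le fun n => min_le_bsup (conss f u) h (n + 1) ω

/-- merge a double sequence -/
def mrg (U : ℕ → ℕ → Ω → ℝ) : ℕ → Ω → ℝ := fun n => U n.unpair.1 n.unpair.2

lemma bsup_le_bsup_mrg (U : ℕ → ℕ → Ω → ℝ) (h : Ω → ℝ) (k : ℕ) (ω : Ω) :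
    bsup (U k) h ω ≤ bsup (mrg U) h ω := by
  refine bsup_le fun j => ?_
  have : U k j = mrg U (Nat.pair k j) := by simp [mrg, Nat.unpair_pair]
  rw [this]
  exact min_le_bsup (mrg U) h _ ω

end BSup

section Key

variable {𝔓 : Set (Measure Ω)}

lemma key_lemma (S : Set (Ω → ℝ)) {f₀ : Ω → ℝ} (hf₀ : f₀ ∈ S) (h : Ω → ℝ)
    (Φ : (Ω → ℝ) → ℝ)
    (hmono : ∀ u v : ℕ → Ω → ℝ, (∀ n, u n ∈ S) → (∀ n, v n ∈ S) →
      (∀ ω, bsup u h ω ≤ bsup v h ω) → Φ (bsup u h) ≤ Φ (bsup v h))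
    (hbdd : ∃ C, ∀ u : ℕ → Ω → ℝ, (∀ n, u n ∈ S) → Φ (bsup u h) ≤ C)
    (hkey : ∀ u v : ℕ → Ω → ℝ, (∀ n, u n ∈ S) → (∀ n, v n ∈ S) →
      (∀ ω, bsup u h ω ≤ bsup v h ω) → Φ (bsup v h) ≤ Φ (bsup u h) →
      QSLe 𝔓 (bsup v h) (bsup u h)) :
    ∃ u : ℕ → Ω → ℝ, (∀ n, u n ∈ S) ∧
      ∀ f ∈ S, QSLe 𝔓 (fun ω => min (f ω) (h ω)) (bsup u h) := by
  obtain ⟨C, hC⟩ := hbdd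
  set T : Set ℝ := {r | ∃ u : ℕ → Ω → ℝ, (∀ n, u n ∈ S) ∧ r = Φ (bsup u h)} with hT
  have hTne : T.Nonempty := ⟨Φ (bsup (fun _ => f₀) h), ⟨fun _ => f₀, fun _ => hf₀, rfl⟩⟩
  have hTbdd : BddAbove T := ⟨C, by rintro r ⟨u, hu, rfl⟩; exact hC u hu⟩
  obtain ⟨x, -, hxt, hxmem⟩ := exists_seq_tendsto_sSup hTne hTbdd
  choose U hU hxU using hxmem
  set w : ℕ → Ω → ℝ := mrg U with hw
  have hwS : ∀ n, w n ∈ S := fun n => hU _ _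
  have hwge : ∀ k, Φ (bsup (U k) h) ≤ Φ (bsup w h) := fun k =>
    hmono (U k) w (hU k) hwS (bsup_le_bsup_mrg U h k)
  have hwle : Φ (bsup w h) ≤ sSup T := le_csSup hTbdd ⟨w, hwS, rfl⟩
  have hwt : sSup T ≤ Φ (bsup w h) :=
    le_of_tendsto hxt (Filter.Eventually.of_forall fun k => by rw [hxU]; exact hwge k)
  refine ⟨w, hwS, fun f hf => ?_⟩
  set v : ℕ → Ω → ℝ := conss f w with hv
  have hvS : ∀ n, v n ∈ S := by
    intro n; cases n with
    | zero => exact hf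
    | succ m => exact hwS m
  have hvge : ∀ ω, bsup w h ω ≤ bsup v h ω := fun ω => by
    rw [hv, bsup_conss]; exact le_max_right _ _
  have hΦv : Φ (bsup v h) ≤ Φ (bsup w h) :=
    le_trans (le_csSup hTbdd ⟨v, hvS, rfl⟩) hwt
  have hq : QSLe 𝔓 (bsup v h) (bsup w h) := hkey w v hwS hvS hvge hΦv
  refine polar_mono (fun ω hω => ?_) hq
  simp only [Set.mem_setOf_eq] at hω ⊢
  intro hc
  exact hω (le_trans (le_trans (min_le_bsup v h 0 ω) (le_of_eq rfl)) hc)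

end Key
section KeySup

variable {𝔓 : Set (Measure Ω)}

lemma key_sup (S : Set (Ω → ℝ)) (hS : S.Nonempty) (hSm : ∀ f ∈ S, MemLinf 𝔓 f)
    {h : Ω → ℝ} (hh : MemLinf 𝔓 h) (hub : IsQSUB 𝔓 S h)
    (Φ : (Ω → ℝ) → ℝ)
    (hmono : ∀ u v : ℕ → Ω → ℝ, (∀ n, u n ∈ S) → (∀ n, v n ∈ S) →
      (∀ ω, bsup u h ω ≤ bsup v h ω) → Φ (bsup u h) ≤ Φ (bsup v h))
    (hbdd : ∃ C, ∀ u : ℕ → Ω → ℝ, (∀ n, u n ∈ S) → Φ (bsup u h) ≤ C)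
    (hkey : ∀ u v : ℕ → Ω → ℝ, (∀ n, u n ∈ S) → (∀ n, v n ∈ S) →
      (∀ ω, bsup u h ω ≤ bsup v h ω) → Φ (bsup v h) ≤ Φ (bsup u h) →
      QSLe 𝔓 (bsup v h) (bsup u h)) :
    ∃ g D, MemLinf 𝔓 g ∧ D ⊆ S ∧ D.Countable ∧ IsQSSup 𝔓 S g ∧ IsQSSup 𝔓 D g := by
  obtain ⟨f₀, hf₀⟩ := hS
  obtain ⟨u, huS, hmin⟩ := key_lemma S hf₀ h Φ hmono hbdd hkey
  have hum : ∀ n, Measurable (u n) := fun n => (hSm _ (huS n)).1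
  have hglinf : MemLinf 𝔓 (bsup u h) := memLinf_bsup (hSm _ (huS 0)) hh hum
  have hubS : IsQSUB 𝔓 S (bsup u h) := by
    intro f hf
    have h1 : QSLe 𝔓 f h := hub f hf
    have h2 := hmin f hf
    refine polar_mono (fun ω hω => ?_) (polar_union h1 h2)
    simp only [Set.mem_union, Set.mem_setOf_eq] at hω ⊢
    by_contra hc
    push_neg at hc
    exact hω (le_trans (le_min le_rfl hc.1) hc.2)
  have hleast : ∀ h'' : Ω → ℝ, Measurable h'' → (∀ n, QSLe 𝔓 (u n) h'') →
      QSLe 𝔓 (bsup u h) h'' := by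
    intro h'' _ hb
    refine polar_mono (fun ω hω => ?_) (polar_iUnion (N := fun n => {ω | ¬ u n ω ≤ h'' ω})
      fun n => hb n)
    simp only [Set.mem_setOf_eq, Set.mem_iUnion] at hω ⊢
    by_contra hc
    push_neg at hc
    exact hω (bsup_le fun n => le_trans (min_le_left _ _) (hc n))
  refine ⟨bsup u h, Set.range u, hglinf, Set.range_subset_iff.2 huS,
    Set.countable_range u, ⟨hubS, ?_⟩, ⟨?_, ?_⟩⟩
  · intro h'' hm hub''
    exact hleast h'' hm fun n => hub'' (u n) (huS n)
  · rintro f ⟨n, rfl⟩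
    exact hubS (u n) (huS n)
  · intro h'' hm hub''
    exact hleast h'' hm fun n => hub'' (u n) ⟨n, rfl⟩

end KeySup
section Dom

variable {𝔓 : Set (Measure Ω)}

lemma integrable_arctan_comp {P : Measure Ω} [IsFiniteMeasure P] {g : Ω → ℝ}
    (hg : Measurable g) : Integrable (fun ω => Real.arctan (g ω)) P := by
  refine ⟨(Real.continuous_arctan.measurable.comp hg).aestronglyMeasurable,
    HasFiniteIntegral.of_bounded (C := Real.pi / 2) (Filter.Eventually.of_forall fun ω => ?_)⟩
  rw [Real.norm_eq_abs, abs_le]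
  exact ⟨(Real.neg_pi_div_two_lt_arctan _).le, (Real.arctan_lt_pi_div_two _).le⟩

lemma dominated_key_sup {P : Measure Ω} (hPp : IsProbabilityMeasure P)
    (hdom : ∀ N : Set Ω, MeasurableSet N → P N = 0 → Polar 𝔓 N)
    (S : Set (Ω → ℝ)) (hS : S.Nonempty) (hSm : ∀ f ∈ S, MemLinf 𝔓 f)
    {h : Ω → ℝ} (hh : MemLinf 𝔓 h) (hub : IsQSUB 𝔓 S h) :
    ∃ g D, MemLinf 𝔓 g ∧ D ⊆ S ∧ D.Countable ∧ IsQSSup 𝔓 S g ∧ IsQSSup 𝔓 D g := by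
  have hmb : ∀ u : ℕ → Ω → ℝ, (∀ n, u n ∈ S) → Measurable (bsup u h) := fun u hu =>
    measurable_bsup (fun n => (hSm _ (hu n)).1) hh.1
  refine key_sup S hS hSm hh hub (fun g => ∫ ω, Real.arctan (g ω) ∂P) ?_ ?_ ?_
  · intro u v hu hv hle
    exact integral_mono (integrable_arctan_comp (hmb u hu)) (integrable_arctan_comp (hmb v hv))
      fun ω => Real.arctan_strictMono.monotone (hle ω)
  · refine ⟨Real.pi / 2, fun u hu => ?_⟩
    calc ∫ ω, Real.arctan (bsup u h ω) ∂P
        ≤ ∫ _, Real.pi / 2 ∂P := integral_mono (integrable_arctan_comp (hmb u hu))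
          (integrable_const _) fun ω => (Real.arctan_lt_pi_div_two _).le
      _ = Real.pi / 2 := by simp
  · intro u v hu hv hle hΦ
    have hiu := integrable_arctan_comp (P := P) (hmb u hu)
    have hiv := integrable_arctan_comp (P := P) (hmb v hv)
    have heq : ∫ ω, Real.arctan (bsup v h ω) ∂P = ∫ ω, Real.arctan (bsup u h ω) ∂P :=
      le_antisymm hΦ (integral_mono hiu hiv fun ω => Real.arctan_strictMono.monotone (hle ω))
    set d : Ω → ℝ := fun ω => Real.arctan (bsup v h ω) - Real.arctan (bsup u h ω) with hd
    have hdint : Integrable d P := hiv.sub hiu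
    have hdz : ∫ ω, d ω ∂P = 0 := by
      rw [hd]
      simp only []
      rw [integral_sub hiv hiu]
      linarith [heq]
    have hae : d =ᵐ[P] 0 := (integral_eq_zero_iff_of_nonneg_ae
      (Filter.Eventually.of_forall fun ω =>
        sub_nonneg.2 (Real.arctan_strictMono.monotone (hle ω))) hdint).1 hdz
    have hnull : P {ω | ¬ d ω = 0} = 0 := by
      have h' : ∀ᵐ ω ∂P, d ω = 0 := hae
      exact ae_iff.1 h'
    have hsub : {ω | ¬ bsup v h ω ≤ bsup u h ω} ⊆ {ω | ¬ d ω = 0} := by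
      intro ω hω
      simp only [Set.mem_setOf_eq, not_le] at hω
      simp only [Set.mem_setOf_eq, hd]
      have := Real.arctan_strictMono hω
      intro hc
      rw [sub_eq_zero] at hc
      exact absurd hc (ne_of_gt this)
    have hms : MeasurableSet {ω | ¬ bsup v h ω ≤ bsup u h ω} := by
      have : {ω | ¬ bsup v h ω ≤ bsup u h ω} = {ω | bsup u h ω < bsup v h ω} := by
        ext ω; simp [not_le]
      rw [this]
      exact measurableSet_lt (hmb u hu) (hmb v hv)
    exact hdom _ hms (measure_mono_null hsub hnull)

lemma dominated_implies (h𝔓 : 𝔓.Nonempty) (hprob : ∀ P ∈ 𝔓, IsProbabilityMeasure P)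
    (hdom : Dominated 𝔓) : LinfDedekind 𝔓 ∧ LinfCountableSup 𝔓 := by
  obtain ⟨P, hPp, hd⟩ := hdom
  haveI := hPp
  constructor
  · rintro S hSne hSm ⟨h, hh, hub⟩
    obtain ⟨g, D, hg, -, -, hsupS, -⟩ := dominated_key_sup hPp hd S hSne hSm hh hub
    exact ⟨g, hg, hsupS⟩
  · intro S hSm g₀ hg₀ hsup₀
    rcases S.eq_empty_or_nonempty with rfl | hSne
    · exact absurd hsup₀ (not_isQSSup_empty h𝔓 hprob hg₀.1)
    obtain ⟨g, D, hg, hDS, hDc, hsupS, hsupD⟩ :=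
      dominated_key_sup hPp hd S hSne hSm hg₀ hsup₀.1
    refine ⟨D, hDS, hDc, fun f hf => hsup₀.1 f (hDS hf), fun h'' hm hub'' =>
      (hsup₀.2 g hg.1 hsupS.1).trans (hsupD.2 h'' hm hub'')⟩

end Dom
section Ind

variable {𝔓 : Set (Measure Ω)}

lemma indC_nonneg (A : Set Ω) (ω : Ω) : 0 ≤ indC A ω := by
  unfold indC
  by_cases h : ω ∈ A <;> simp [Set.indicator_apply, h]

lemma indC_le_one (A : Set Ω) (ω : Ω) : indC A ω ≤ 1 := by
  unfold indC
  by_cases h : ω ∈ A <;> simp [Set.indicator_apply, h]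

lemma indC_of_mem {A : Set Ω} {ω : Ω} (h : ω ∈ A) : indC A ω = 1 := by
  simp [indC, Set.indicator_apply, h]

lemma indC_of_not_mem {A : Set Ω} {ω : Ω} (h : ω ∉ A) : indC A ω = 0 := by
  simp [indC, Set.indicator_apply, h]

lemma indC_mono {A B : Set Ω} (h : A ⊆ B) (ω : Ω) : indC A ω ≤ indC B ω := by
  by_cases hω : ω ∈ A
  · rw [indC_of_mem hω, indC_of_mem (h hω)]
  · rw [indC_of_not_mem hω]; exact indC_nonneg B ω

lemma measurable_indC {A : Set Ω} (hA : MeasurableSet A) : Measurable (indC A) :=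
  measurable_one.indicator hA

lemma memLinf_indC {A : Set Ω} (hA : MeasurableSet A) : MemLinf 𝔓 (indC A) :=
  ⟨measurable_indC hA, 1, qsle_of_le fun ω => by
    rw [abs_of_nonneg (indC_nonneg A ω)]; exact indC_le_one A ω⟩

/-- From a supremum `g` of the null-indicator family together with a countable subfamily
having the same supremum, extract an order support. -/
lemma support_of_countable_sup (h𝔓 : 𝔓.Nonempty) (hprob : ∀ P ∈ 𝔓, IsProbabilityMeasure P)
    (m : Measure Ω) {g : Ω → ℝ} (hgm : MemLinf 𝔓 g)
    (hsup : IsQSSup 𝔓 {f | ∃ A, MeasurableSet A ∧ m A = 0 ∧ f = indC A} g)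
    {D : Set (Ω → ℝ)} (hDS : D ⊆ {f | ∃ A, MeasurableSet A ∧ m A = 0 ∧ f = indC A})
    (hDc : D.Countable) (hsupD : IsQSSup 𝔓 D g) :
    Supported 𝔓 m := by
  have hDne : D.Nonempty := by
    rcases D.eq_empty_or_nonempty with rfl | hne
    · exact absurd hsupD (not_isQSSup_empty h𝔓 hprob hgm.1)
    · exact hne
  obtain ⟨w, hw⟩ := hDc.exists_eq_range hDne
  have hmem : ∀ n, ∃ A, MeasurableSet A ∧ m A = 0 ∧ w n = indC A := by
    intro n
    exact hDS (hw ▸ Set.mem_range_self n)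
  choose A hAm hA0 hwA using hmem
  set U : Set Ω := ⋃ n, A n with hU
  have hUm : MeasurableSet U := MeasurableSet.iUnion hAm
  have hU0 : m U = 0 := measure_iUnion_null hA0
  refine ⟨Uᶜ, hUm.compl, by rwa [compl_compl], ?_⟩
  intro N hNm hN0
  -- indC (U ∪ (N ∩ Uᶜ)) is in the family, hence ≤ g ≤ indC U q.s.
  have hBm : MeasurableSet (U ∪ (N ∩ Uᶜ)) := hUm.union (hNm.inter hUm.compl)
  have hB0 : m (U ∪ (N ∩ Uᶜ)) = 0 := measure_union_null hU0 hN0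
  have h1 : QSLe 𝔓 (indC (U ∪ (N ∩ Uᶜ))) g := hsup.1 _ ⟨_, hBm, hB0, rfl⟩
  have h2 : QSLe 𝔓 g (indC U) := by
    refine hsupD.2 (indC U) (measurable_indC hUm) ?_
    rintro f hf
    obtain ⟨n, rfl⟩ : ∃ n, w n = f := by rwa [hw, Set.mem_range] at hf
    rw [hwA n]
    exact qsle_of_le fun ω => indC_mono (Set.subset_iUnion A n) ω
  have h3 : QSLe 𝔓 (indC (U ∪ (N ∩ Uᶜ))) (indC U) := h1.trans h2
  refine polar_mono (fun ω hω => ?_) h3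
  simp only [Set.mem_setOf_eq]
  rcases hω with ⟨hωN, hωU⟩
  rw [indC_of_mem (Set.mem_union_right _ (Set.mem_inter hωN hωU)), indC_of_not_mem hωU]
  norm_num

lemma one_implies_three (h𝔓 : 𝔓.Nonempty) (hprob : ∀ P ∈ 𝔓, IsProbabilityMeasure P)
    (hded : LinfDedekind 𝔓) (hcs : LinfCountableSup 𝔓) : scaC 𝔓 = caC 𝔓 := by
  refine Set.Subset.antisymm (fun μ hμ => hμ.1) (fun μ hμ => ⟨hμ, ?_⟩)
  set m := μ.totalVariation with hm
  set 𝒮 : Set (Ω → ℝ) := {f | ∃ A, MeasurableSet A ∧ m A = 0 ∧ f = indC A} with h𝒮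
  have hSm : ∀ f ∈ 𝒮, MemLinf 𝔓 f := by
    rintro f ⟨A, hAm, -, rfl⟩
    exact memLinf_indC hAm
  have hSne : 𝒮.Nonempty := ⟨indC ∅, ∅, MeasurableSet.empty, measure_empty, rfl⟩
  obtain ⟨g, hgm, hsup⟩ := hded 𝒮 hSne hSm
    ⟨fun _ => 1, memLinf_const 1, fun f hf => by
      obtain ⟨A, -, -, rfl⟩ := hf
      exact qsle_of_le fun ω => indC_le_one A ω⟩
  obtain ⟨D, hDS, hDc, hsupD⟩ := hcs 𝒮 hSm g hgm hsup
  exact support_of_countable_sup h𝔓 hprob m hgm hsup hDS hDc hsupD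

end Ind
section Xi

variable {𝔓 : Set (Measure Ω)} {ξ : (Ω → ℝ) → ℝ}

lemma xi_zero (hξ : StrictlyPositiveFunctional 𝔓 ξ) : ξ 0 = 0 := by
  have h := hξ.2.2.1 0 0 memLinf_zero
  rw [zero_smul, zero_mul] at h
  exact h

lemma xi_nonneg (hξ : StrictlyPositiveFunctional 𝔓 ξ) {f : Ω → ℝ} (hf : MemLinf 𝔓 f)
    (h : QSLe 𝔓 0 f) : 0 ≤ ξ f := by
  by_cases hq : QSEq 𝔓 f 0
  · rw [hξ.1 f 0 hf memLinf_zero hq, xi_zero hξ]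
  · exact (hξ.2.2.2 f hf h hq).le

lemma xi_qseq_zero (hξ : StrictlyPositiveFunctional 𝔓 ξ) {f : Ω → ℝ} (hf : MemLinf 𝔓 f)
    (h0 : QSLe 𝔓 0 f) (hle : ξ f ≤ 0) : QSEq 𝔓 f 0 := by
  by_contra hq
  exact absurd (hξ.2.2.2 f hf h0 hq) (not_lt.2 hle)

lemma xi_add_sub (hξ : StrictlyPositiveFunctional 𝔓 ξ) {f g : Ω → ℝ}
    (hf : MemLinf 𝔓 f) (hg : MemLinf 𝔓 g) : ξ g = ξ f + ξ (g - f) := by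
  have h := hξ.2.1 f (g - f) hf (hg.sub hf)
  have hfg : f + (g - f) = g := by ring
  rwa [hfg] at h

lemma xi_mono (hξ : StrictlyPositiveFunctional 𝔓 ξ) {f g : Ω → ℝ}
    (hf : MemLinf 𝔓 f) (hg : MemLinf 𝔓 g) (h : QSLe 𝔓 f g) : ξ f ≤ ξ g := by
  rw [xi_add_sub hξ hf hg]
  have h0 : QSLe 𝔓 0 (g - f) := by
    refine polar_mono (fun ω hω => ?_) h
    simp only [Set.mem_setOf_eq, Pi.sub_apply, Pi.zero_apply] at hω ⊢
    intro hc
    exact hω (sub_nonneg.2 hc)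
  linarith [xi_nonneg hξ (hg.sub hf) h0]

lemma xi_countable_sup (h𝔓 : 𝔓.Nonempty) (hprob : ∀ P ∈ 𝔓, IsProbabilityMeasure P)
    (hξ : StrictlyPositiveFunctional 𝔓 ξ) : LinfCountableSup 𝔓 := by
  intro S hSm g₀ hg₀ hsup₀
  rcases S.eq_empty_or_nonempty with rfl | hSne
  · exact absurd hsup₀ (not_isQSSup_empty h𝔓 hprob hg₀.1)
  have hbl : ∀ u : ℕ → Ω → ℝ, (∀ n, u n ∈ S) → MemLinf 𝔓 (bsup u g₀) := fun u hu =>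
    memLinf_bsup (hSm _ (hu 0)) hg₀ fun n => (hSm _ (hu n)).1
  have hmono : ∀ u v : ℕ → Ω → ℝ, (∀ n, u n ∈ S) → (∀ n, v n ∈ S) →
      (∀ ω, bsup u g₀ ω ≤ bsup v g₀ ω) → ξ (bsup u g₀) ≤ ξ (bsup v g₀) := by
    intro u v hu hv hle
    exact xi_mono hξ (hbl u hu) (hbl v hv) (qsle_of_le hle)
  have hbdd : ∃ C, ∀ u : ℕ → Ω → ℝ, (∀ n, u n ∈ S) → ξ (bsup u g₀) ≤ C := by
    refine ⟨ξ g₀, fun u hu => ?_⟩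
    exact xi_mono hξ (hbl u hu) hg₀ (qsle_of_le (bsup_le_h u g₀))
  have hkey : ∀ u v : ℕ → Ω → ℝ, (∀ n, u n ∈ S) → (∀ n, v n ∈ S) →
      (∀ ω, bsup u g₀ ω ≤ bsup v g₀ ω) → ξ (bsup v g₀) ≤ ξ (bsup u g₀) →
      QSLe 𝔓 (bsup v g₀) (bsup u g₀) := by
    intro u v hu hv hle hΦ
    have hdle : ξ (bsup v g₀ - bsup u g₀) ≤ 0 := by
      have := xi_add_sub hξ (hbl u hu) (hbl v hv)
      linarith
    have h0 : QSLe 𝔓 0 (bsup v g₀ - bsup u g₀) :=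
      qsle_of_le fun ω => sub_nonneg.2 (hle ω)
    have hq : QSEq 𝔓 (bsup v g₀ - bsup u g₀) 0 :=
      xi_qseq_zero hξ ((hbl v hv).sub (hbl u hu)) h0 hdle
    refine polar_mono (fun ω hω => ?_) hq.1
    simp only [Set.mem_setOf_eq, Pi.sub_apply, Pi.zero_apply] at hω ⊢
    intro hc
    exact hω (by linarith)
  obtain ⟨g, D, hg, hDS, hDc, hsupS, hsupD⟩ :=
    key_sup S hSne hSm hg₀ hsup₀.1 ξ hmono hbdd hkey
  exact ⟨D, hDS, hDc, fun f hf => hsup₀.1 f (hDS hf), fun h'' hm hub'' =>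
      (hsup₀.2 g hg.1 hsupS.1).trans (hsupD.2 h'' hm hub'')⟩

lemma xi_sca (hξ : StrictlyPositiveFunctional 𝔓 ξ) : caC 𝔓 ⊆ scaC 𝔓 := by
  intro μ hμ
  refine ⟨hμ, ?_⟩
  set m := μ.totalVariation with hm
  set T : Set ℝ := {r | ∃ A, MeasurableSet A ∧ m A = 0 ∧ r = ξ (indC A)} with hT
  have hTne : T.Nonempty := ⟨ξ (indC ∅), ∅, MeasurableSet.empty, measure_empty, rfl⟩
  have hTbdd : BddAbove T := by
    refine ⟨ξ (fun _ => 1), ?_⟩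
    rintro r ⟨A, hAm, -, rfl⟩
    exact xi_mono hξ (memLinf_indC hAm) (memLinf_const 1) (qsle_of_le (indC_le_one A))
  obtain ⟨x, -, hxt, hxmem⟩ := exists_seq_tendsto_sSup hTne hTbdd
  choose A hAm hA0 hxA using hxmem
  set U : Set Ω := ⋃ n, A n with hU
  have hUm : MeasurableSet U := MeasurableSet.iUnion hAm
  have hU0 : m U = 0 := measure_iUnion_null hA0
  have hUle : ξ (indC U) ≤ sSup T := le_csSup hTbdd ⟨U, hUm, hU0, rfl⟩
  have hUge : sSup T ≤ ξ (indC U) := by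
    refine le_of_tendsto hxt (Filter.Eventually.of_forall fun k => ?_)
    rw [hxA k]
    exact xi_mono hξ (memLinf_indC (hAm k)) (memLinf_indC hUm)
      (qsle_of_le fun ω => indC_mono (Set.subset_iUnion A k) ω)
  refine ⟨Uᶜ, hUm.compl, by rwa [compl_compl], ?_⟩
  intro N hNm hN0
  set W : Set Ω := N ∩ Uᶜ with hW
  have hWm : MeasurableSet W := hNm.inter hUm.compl
  have hdisj : Disjoint U W := disjoint_compl_right.mono_right Set.inter_subset_right
  have hBm : MeasurableSet (U ∪ W) := hUm.union hWm
  have hB0 : m (U ∪ W) = 0 := measure_union_null hU0 hN0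
  have hBle : ξ (indC (U ∪ W)) ≤ sSup T := le_csSup hTbdd ⟨U ∪ W, hBm, hB0, rfl⟩
  have hsplit : indC (U ∪ W) = indC U + indC W := by
    unfold indC
    exact Set.indicator_union_of_disjoint hdisj 1
  have hadd : ξ (indC (U ∪ W)) = ξ (indC U) + ξ (indC W) := by
    rw [hsplit]
    exact hξ.2.1 _ _ (memLinf_indC hUm) (memLinf_indC hWm)
  have hWle : ξ (indC W) ≤ 0 := by
    have := le_antisymm hUle hUge
    rw [hadd] at hBle
    linarith
  have hq : QSEq 𝔓 (indC W) 0 :=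
    xi_qseq_zero hξ (memLinf_indC hWm) (qsle_of_le (indC_nonneg W)) hWle
  refine polar_mono (fun ω hω => ?_) hq.1
  simp only [Set.mem_setOf_eq, Pi.zero_apply]
  rw [indC_of_mem hω]
  norm_num

end Xi
section Three

variable {𝔓 : Set (Measure Ω)}

lemma totalVariation_toSignedMeasure' (P : Measure Ω) [IsFiniteMeasure P] :
    P.toSignedMeasure.totalVariation = P := by
  have : P.toSignedMeasure.toJordanDecomposition =
      ⟨P, 0, Measure.MutuallySingular.zero_right⟩ := by
    apply SignedMeasure.toJordanDecomposition_eq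
    simp [JordanDecomposition.toSignedMeasure]
  rw [SignedMeasure.totalVariation, this]
  simp

lemma supported_of_sca (hprob : ∀ P ∈ 𝔓, IsProbabilityMeasure P)
    (hsca : scaC 𝔓 = caC 𝔓) {P : Measure Ω} (hP : P ∈ 𝔓) : Supported 𝔓 P := by
  haveI := hprob P hP
  have hmem : P.toSignedMeasure ∈ caC 𝔓 := by
    intro N hN hpol
    rw [totalVariation_toSignedMeasure']
    exact hpol P hP
  rw [← hsca] at hmem
  have h := hmem.2
  rwa [totalVariation_toSignedMeasure'] at h

lemma three_implies_equiv (h𝔓 : 𝔓.Nonempty) (hprob : ∀ P ∈ 𝔓, IsProbabilityMeasure P)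
    (hsca : scaC 𝔓 = caC 𝔓) (hcs : LinfCountableSup 𝔓) :
    ∃ Pstar : Measure Ω, IsProbabilityMeasure Pstar ∧
      (∀ N : Set Ω, MeasurableSet N → Polar 𝔓 N → Pstar N = 0) ∧
      (∀ N : Set Ω, MeasurableSet N → Pstar N = 0 → Polar 𝔓 N) := by
  have hsupp : ∀ P : Measure Ω, P ∈ 𝔓 → ∃ SP, IsOrderSupport 𝔓 P SP := fun P hP =>
    supported_of_sca hprob hsca hP
  choose Sp hSp using hsupp
  set 𝒮 : Set (Ω → ℝ) := {f | ∃ P, ∃ hP : P ∈ 𝔓, f = indC (Sp P hP)} with h𝒮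
  have hSm : ∀ f ∈ 𝒮, MemLinf 𝔓 f := by
    rintro f ⟨P, hP, rfl⟩
    exact memLinf_indC (hSp P hP).1
  have hsup1 : IsQSSup 𝔓 𝒮 (fun _ => 1) := by
    constructor
    · rintro f ⟨P, hP, rfl⟩
      exact qsle_of_le (indC_le_one _)
    · intro h hm hub Q hQ
      have h1 : Polar 𝔓 {ω | ¬ indC (Sp Q hQ) ω ≤ h ω} := hub _ ⟨Q, hQ, rfl⟩
      have hsub : {ω | ¬ (1:ℝ) ≤ h ω} ∩ Sp Q hQ ⊆ {ω | ¬ indC (Sp Q hQ) ω ≤ h ω} := by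
        rintro ω ⟨hω1, hω2⟩
        simp only [Set.mem_setOf_eq] at hω1 ⊢
        rwa [indC_of_mem hω2]
      have key : Q {ω | ¬ (1:ℝ) ≤ h ω} = 0 := by
        refine le_antisymm ?_ zero_le
        calc Q {ω | ¬ (1:ℝ) ≤ h ω}
            ≤ Q (({ω | ¬ (1:ℝ) ≤ h ω} ∩ Sp Q hQ) ∪ (Sp Q hQ)ᶜ) := by
              refine measure_mono fun ω hω => ?_
              by_cases hs : ω ∈ Sp Q hQ
              · exact Or.inl ⟨hω, hs⟩
              · exact Or.inr hs
          _ = 0 := measure_union_null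
              (measure_mono_null hsub (h1 Q hQ)) (hSp Q hQ).2.1
      exact key
  obtain ⟨D, hDS, hDc, hsupD⟩ := hcs 𝒮 hSm _ (memLinf_const 1) hsup1
  have hDne : D.Nonempty := by
    rcases D.eq_empty_or_nonempty with rfl | hne
    · exact absurd hsupD (not_isQSSup_empty h𝔓 hprob measurable_const)
    · exact hne
  obtain ⟨w, hw⟩ := hDc.exists_eq_range hDne
  have hmem : ∀ n, ∃ P, ∃ hP : P ∈ 𝔓, w n = indC (Sp P hP) := fun n =>
    hDS (hw ▸ Set.mem_range_self n)
  choose Q hQ hwQ using hmem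
  set T : ℕ → Set Ω := fun n => Sp (Q n) (hQ n) with hTdef
  have hTm : ∀ n, MeasurableSet (T n) := fun n => (hSp (Q n) (hQ n)).1
  set c : ℕ → ENNReal := fun n => (2:ENNReal)⁻¹ ^ (n+1) with hc
  have hc0 : ∀ n, c n ≠ 0 := fun n => by
    simp [hc, pow_ne_zero, ENNReal.inv_ne_zero]
  have hcsum : ∑' n, c n = 1 := by
    have h1 : ∀ n : ℕ, ((2:ENNReal))⁻¹ ^ (n+1) = 2⁻¹ * 2⁻¹ ^ n := fun n => pow_succ' _ _
    simp only [hc, h1]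
    rw [ENNReal.tsum_mul_left, ENNReal.tsum_geometric, ENNReal.one_sub_inv_two, inv_inv]
    exact ENNReal.inv_mul_cancel (by norm_num) (by norm_num)
  set Pstar : Measure Ω := Measure.sum (fun n => c n • Q n) with hPs
  have happ : ∀ N : Set Ω, MeasurableSet N → Pstar N = ∑' n, c n * Q n N := by
    intro N hN
    rw [hPs, Measure.sum_apply _ hN]
    simp [Measure.smul_apply, smul_eq_mul]
  refine ⟨Pstar, ⟨?_⟩, ?_, ?_⟩
  · rw [happ Set.univ MeasurableSet.univ]
    have : ∀ n, Q n Set.univ = 1 := fun n => (hprob (Q n) (hQ n)).measure_univ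
    simp only [this, mul_one]
    exact hcsum
  · intro N hN hpol
    rw [happ N hN]
    simp [fun n => hpol (Q n) (hQ n)]
  · intro N hN hnull
    rw [happ N hN] at hnull
    rw [ENNReal.tsum_eq_zero] at hnull
    have hQN : ∀ n, Q n N = 0 := by
      intro n
      rcases mul_eq_zero.1 (hnull n) with h | h
      · exact absurd h (hc0 n)
      · exact h
    have hpolT : ∀ n, Polar 𝔓 (N ∩ T n) := fun n =>
      (hSp (Q n) (hQ n)).2.2 N hN (measure_mono_null Set.inter_subset_left (hQN n))
    set V : Set Ω := ⋃ n, T n with hV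
    have hVm : MeasurableSet V := MeasurableSet.iUnion hTm
    have hVc : Polar 𝔓 Vᶜ := by
      have h2 : QSLe 𝔓 (fun _ => 1) (indC V) := by
        refine hsupD.2 (indC V) (measurable_indC hVm) ?_
        intro f hf
        obtain ⟨n, rfl⟩ : ∃ n, w n = f := by rwa [hw, Set.mem_range] at hf
        rw [hwQ n]
        exact qsle_of_le fun ω => indC_mono (Set.subset_iUnion T n) ω
      refine polar_mono (fun ω hω => ?_) h2
      simp only [Set.mem_setOf_eq]
      rw [indC_of_not_mem hω]
      norm_num
    refine polar_mono (fun ω hω => ?_) (polar_union (polar_iUnion hpolT) hVc)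
    by_cases hv : ω ∈ V
    · exact Or.inl (Set.mem_iUnion.2 (by
        obtain ⟨n, hn⟩ := Set.mem_iUnion.1 hv
        exact ⟨n, hω, hn⟩))
    · exact Or.inr hv

end Three
section Four

variable {𝔓 : Set (Measure Ω)}

lemma viol_measurableSet {f g : Ω → ℝ} (hf : Measurable f) (hg : Measurable g) :
    MeasurableSet {ω | ¬ f ω ≤ g ω} := by
  have : {ω | ¬ f ω ≤ g ω} = {ω | g ω < f ω} := by ext ω; simp [not_le]
  rw [this]
  exact measurableSet_lt hg hf

lemma integrable_of_memLinf {Pstar : Measure Ω} [IsFiniteMeasure Pstar]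
    (hnull : ∀ N : Set Ω, MeasurableSet N → Polar 𝔓 N → Pstar N = 0)
    {f : Ω → ℝ} (hf : MemLinf 𝔓 f) : Integrable f Pstar := by
  obtain ⟨hm, mf, hb⟩ := hf
  refine ⟨hm.aestronglyMeasurable, HasFiniteIntegral.of_bounded (C := mf) ?_⟩
  have hms : MeasurableSet {ω | ¬ |f ω| ≤ mf} := viol_measurableSet hm.abs measurable_const
  have h0 : Pstar {ω | ¬ |f ω| ≤ mf} = 0 := hnull _ hms hb
  rw [ae_iff]
  have hset : {a | ¬ ‖f a‖ ≤ mf} = {ω | ¬ |f ω| ≤ mf} := by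
    ext ω; simp [Real.norm_eq_abs]
  rw [hset]
  exact h0

lemma ae_of_qsle {Pstar : Measure Ω}
    (hnull : ∀ N : Set Ω, MeasurableSet N → Polar 𝔓 N → Pstar N = 0)
    {f g : Ω → ℝ} (hf : Measurable f) (hg : Measurable g) (h : QSLe 𝔓 f g) :
    ∀ᵐ ω ∂Pstar, f ω ≤ g ω := by
  rw [ae_iff]
  exact hnull _ (viol_measurableSet hf hg) h

lemma three_implies_four (h𝔓 : 𝔓.Nonempty) (hprob : ∀ P ∈ 𝔓, IsProbabilityMeasure P)
    (hsca : scaC 𝔓 = caC 𝔓) (hcs : LinfCountableSup 𝔓) :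
    ∃ ξ : (Ω → ℝ) → ℝ, StrictlyPositiveFunctional 𝔓 ξ := by
  obtain ⟨Pstar, hPp, hnull, hpol⟩ := three_implies_equiv h𝔓 hprob hsca hcs
  haveI := hPp
  refine ⟨fun f => ∫ ω, f ω ∂Pstar, ?_, ?_, ?_, ?_⟩
  · intro f g hf hg hq
    refine integral_congr_ae ?_
    have h1 := ae_of_qsle hnull hf.1 hg.1 hq.1
    have h2 := ae_of_qsle hnull hg.1 hf.1 hq.2
    filter_upwards [h1, h2] with ω ha hb
    exact le_antisymm ha hb
  · intro f g hf hg
    simp only [Pi.add_apply]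
    exact integral_add (integrable_of_memLinf hnull hf) (integrable_of_memLinf hnull hg)
  · intro cr f hf
    calc ∫ ω, (cr • f) ω ∂Pstar = ∫ ω, cr • f ω ∂Pstar := rfl
      _ = cr • ∫ ω, f ω ∂Pstar := integral_smul cr _
      _ = cr * ∫ ω, f ω ∂Pstar := rfl
  · intro f hf h0 hne
    have hae0 : 0 ≤ᵐ[Pstar] f := by
      have := ae_of_qsle hnull measurable_const hf.1 h0
      filter_upwards [this] with ω hω using hω
    have hint := integrable_of_memLinf hnull hf
    rw [integral_pos_iff_support_of_nonneg_ae hae0 hint]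
    have hA : ¬ Polar 𝔓 {ω | ¬ f ω ≤ 0} := fun hc => hne ⟨hc, h0⟩
    have hApos : 0 < Pstar {ω | ¬ f ω ≤ 0} := by
      rcases eq_or_lt_of_le (zero_le (a := Pstar {ω | ¬ f ω ≤ 0})) with heq | hlt
      · exact absurd (hpol _ (viol_measurableSet hf.1 measurable_const) heq.symm) hA
      · exact hlt
    refine lt_of_lt_of_le hApos (measure_mono fun ω hω => ?_)
    simp only [Set.mem_setOf_eq, not_le] at hω
    exact ne_of_gt hω

end Four
/-- Proposition (thm:countsup): super Dedekind completeness of `L^∞_𝐜`, dominatedness of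
`𝔓`, `sca_𝐜 = ca_𝐜` together with the countable sup property, and the existence of a
strictly positive linear functional on `L^∞_𝐜` are all equivalent. -/
theorem superDedekind_tfae
    {Ω : Type*} [MeasurableSpace Ω] (𝔓 : Set (Measure Ω)) (h𝔓 : 𝔓.Nonempty)
    (hprob : ∀ P ∈ 𝔓, IsProbabilityMeasure P) :
    List.TFAE
      [LinfDedekind 𝔓 ∧ LinfCountableSup 𝔓,
       Dominated 𝔓,
       scaC 𝔓 = caC 𝔓 ∧ LinfCountableSup 𝔓,
       ∃ ξ : (Ω → ℝ) → ℝ, StrictlyPositiveFunctional 𝔓 ξ] := by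
  tfae_have 2 → 1 := fun h => dominated_implies h𝔓 hprob h
  tfae_have 1 → 3 := fun h => ⟨one_implies_three h𝔓 hprob h.1 h.2, h.2⟩
  tfae_have 3 → 2 := by
    rintro ⟨h1, h2⟩
    obtain ⟨P, hp, -, hp2⟩ := three_implies_equiv h𝔓 hprob h1 h2
    exact ⟨P, hp, hp2⟩
  tfae_have 3 → 4 := fun h => three_implies_four h𝔓 hprob h.1 h.2
  tfae_have 4 → 3 := by
    rintro ⟨ξ, hξ⟩
    exact ⟨Set.Subset.antisymm (fun μ hμ => hμ.1) (xi_sca hξ),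
      xi_countable_sup h𝔓 hprob hξ⟩
  tfae_finish

end Robust
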